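/- Let V be a quaternionic vector space with admissible endomorphisms forming the unit sphere Z_V, and let W ⊆ V be a real subspace such that J(W) ⊆ W for every J ∈ Z_V. Then for any symmetric bilinear map B : W × W → V/W satisfying B(X, JY) = J̄ B(X,Y) for all J ∈ Z_V and X, Y ∈ W (where J̄ is the induced endomorphism of V/W), one has B = 0. -/

import Mathlib

noncomputable def stmt16.qi : Quaternion ℝ := ⟨0,1,0,0⟩
noncomputable def stmt16.qj : Quaternion ℝ := ⟨0,0,1,0⟩
noncomputable def stmt16.qk : Quaternion ℝ := ⟨0,0,0,1⟩

namespace stmt16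

lemma qi_re : qi.re = 0 := rfl
lemma qj_re : qj.re = 0 := rfl
lemma qk_re : qk.re = 0 := rfl

lemma qi_norm : ‖qi‖ = 1 := by
  rw [norm_eq_sqrt_real_inner, Quaternion.inner_self]
  rw [Quaternion.normSq_def']
  simp [qi]

lemma qj_norm : ‖qj‖ = 1 := by
  rw [norm_eq_sqrt_real_inner, Quaternion.inner_self]
  rw [Quaternion.normSq_def']
  simp [qj]

lemma qk_norm : ‖qk‖ = 1 := by
  rw [norm_eq_sqrt_real_inner, Quaternion.inner_self]
  rw [Quaternion.normSq_def']
  simp [qk]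

lemma qi_sq : qi * qi = -1 := by
  ext <;> simp only [Quaternion.re_mul, Quaternion.imI_mul, Quaternion.imJ_mul, Quaternion.imK_mul, Quaternion.re_neg, Quaternion.imI_neg, Quaternion.imJ_neg, Quaternion.imK_neg, Quaternion.re_one, Quaternion.imI_one, Quaternion.imJ_one, Quaternion.imK_one] <;> simp [qi]

lemma qj_sq : qj * qj = -1 := by
  ext <;> simp only [Quaternion.re_mul, Quaternion.imI_mul, Quaternion.imJ_mul, Quaternion.imK_mul, Quaternion.re_neg, Quaternion.imI_neg, Quaternion.imJ_neg, Quaternion.imK_neg, Quaternion.re_one, Quaternion.imI_one, Quaternion.imJ_one, Quaternion.imK_one] <;> simp [qj]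

lemma qk_sq : qk * qk = -1 := by
  ext <;> simp only [Quaternion.re_mul, Quaternion.imI_mul, Quaternion.imJ_mul, Quaternion.imK_mul, Quaternion.re_neg, Quaternion.imI_neg, Quaternion.imJ_neg, Quaternion.imK_neg, Quaternion.re_one, Quaternion.imI_one, Quaternion.imJ_one, Quaternion.imK_one] <;> simp [qk]

lemma qi_mul_qj : qi * qj = qk := by
  ext <;> simp only [Quaternion.re_mul, Quaternion.imI_mul, Quaternion.imJ_mul,
    Quaternion.imK_mul, Quaternion.re_neg, Quaternion.imI_neg, Quaternion.imJ_neg, Quaternion.imK_neg, Quaternion.re_one, Quaternion.imI_one, Quaternion.imJ_one, Quaternion.imK_one] <;> simp [qi, qj, qk]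

end stmt16

open stmt16 in
/-- Algebraic core of total geodesicity of quaternionic submanifolds: if
`W ⊆ V` is invariant under all admissible complex structures `J = ρ(q)` and
`B : W × W → V/W` is a symmetric bilinear map with `B(X, JY) = J̄ B(X,Y)` for
all such `J`, then `B = 0`. -/
theorem stmt16 {V : Type*} [AddCommGroup V] [Module ℝ V]
    (ρ : Quaternion ℝ →ₐ[ℝ] Module.End ℝ V) (W : Submodule ℝ V)
    (hW : ∀ q : Quaternion ℝ, q.re = 0 → ‖q‖ = 1 →
      W ≤ W.comap (ρ q : V →ₗ[ℝ] V))
    (B : W →ₗ[ℝ] W →ₗ[ℝ] (V ⧸ W))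
    (hsymm : ∀ X Y : W, B X Y = B Y X)
    (hB : ∀ (q : Quaternion ℝ) (hq : q.re = 0) (hn : ‖q‖ = 1) (X Y : W),
      B X ⟨ρ q (Y : V), hW q hq hn Y.2⟩ =
        Submodule.mapQ W W (ρ q : V →ₗ[ℝ] V) (hW q hq hn) (B X Y)) :
    B = 0 := by
  -- the square of the induced map on the quotient is `-id` when `q * q = -1`
  have hsq : ∀ (q : Quaternion ℝ) (hq : q.re = 0) (hn : ‖q‖ = 1), q * q = -1 →
      ∀ x : V ⧸ W, Submodule.mapQ W W (ρ q : V →ₗ[ℝ] V) (hW q hq hn)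
        (Submodule.mapQ W W (ρ q : V →ₗ[ℝ] V) (hW q hq hn) x) = -x := by
    intro q hq hn hq2 x
    obtain ⟨v, rfl⟩ := Submodule.Quotient.mk_surjective W x
    have hv : ρ q (ρ q v) = -v := by
      have : (ρ q * ρ q) v = -v := by
        rw [← map_mul, hq2, map_neg, map_one]
        rfl
      simpa [Module.End.mul_apply] using this
    rw [Submodule.mapQ_apply, Submodule.mapQ_apply, hv]
    simp
  -- B(JX, JY) = -B(X, Y) for any admissible J = ρ q with q² = -1
  have key : ∀ (q : Quaternion ℝ) (hq : q.re = 0) (hn : ‖q‖ = 1), q * q = -1 →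
      ∀ X Y : W, B ⟨ρ q (X : V), hW q hq hn X.2⟩ ⟨ρ q (Y : V), hW q hq hn Y.2⟩
        = -(B X Y) := by
    intro q hq hn hq2 X Y
    rw [hB q hq hn ⟨ρ q (X : V), hW q hq hn X.2⟩ Y,
      hsymm ⟨ρ q (X : V), hW q hq hn X.2⟩ Y, hB q hq hn Y X,hsymm Y X]
    exact hsq q hq hn hq2 _
  ext X Y
  simp only [LinearMap.zero_apply]
  set a := B X Y with ha
  -- using K = I * J
  have hKX : ∀ Z : W, (⟨ρ qk (Z : V), hW qk qk_re qk_norm Z.2⟩ : W)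
      = ⟨ρ qi ((⟨ρ qj (Z : V), hW qj qj_re qj_norm Z.2⟩ : W) : V),
          hW qi qi_re qi_norm (hW qj qj_re qj_norm Z.2)⟩ := by
    intro Z
    apply Subtype.ext
    show ρ qk (Z : V) = ρ qi (ρ qj (Z : V))
    rw [← qi_mul_qj, map_mul]
    rfl
  have h1 : B ⟨ρ qk (X : V), hW qk qk_re qk_norm X.2⟩
      ⟨ρ qk (Y : V), hW qk qk_re qk_norm Y.2⟩ = -a :=
    key qk qk_re qk_norm qk_sq X Y
  have h2 : B ⟨ρ qk (X : V), hW qk qk_re qk_norm X.2⟩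
      ⟨ρ qk (Y : V), hW qk qk_re qk_norm Y.2⟩ = a := by
    rw [hKX X, hKX Y, key qi qi_re qi_norm qi_sq, key qj qj_re qj_norm qj_sq, neg_neg]
  have : a = -a := by rw [← h1, h2]
  have h2a : (2 : ℝ) • a = 0 := by
    rw [two_smul]
    nth_rewrite 1 [this]
    exact neg_add_cancel a
  have := smul_eq_zero.mp h2a
  simpa using this
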